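/- Let α be an r-cycle in S_n. For any two points x_i and x_j in the support of α, there exists an involution ω in S_n such that ω conjugates α to α⁻¹, ω maps x_i to x_j, and the support of ω is contained in the support of α. -/

import Mathlib

/-- Lemma 2.1 (ii): for an r-cycle α and any points x, y moved by α, there is an
involution ω with α^ω = α⁻¹, ω mapping x to y, and support of ω inside support of α. -/
theorem stmt_1 {n r : ℕ} (α : Equiv.Perm (Fin n)) (hα : α.IsCycle)
    (hr : α.support.card = r) (x y : Fin n) (hx : x ∈ α.support) (hy : y ∈ α.support) :
    ∃ ω : Equiv.Perm (Fin n), ω * ω = 1 ∧ ω⁻¹ * α * ω = α⁻¹ ∧ ω x = y ∧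
      ω.support ⊆ α.support := by
  classical
  obtain ⟨m, hm⟩ := hα.sameCycle (Equiv.Perm.mem_support.mp hx) (Equiv.Perm.mem_support.mp hy)
  set f : Fin n → Fin n := fun z =>
    if h : α.SameCycle x z then (α ^ (m - Classical.choose h)) x else z with hf
  have key : ∀ k : ℤ, f ((α ^ k) x) = (α ^ (m - k)) x := by
    intro k
    have h : α.SameCycle x ((α ^ k) x) := ⟨k, rfl⟩
    rw [hf]
    simp only [dif_pos h]
    set l := Classical.choose h with hl
    have hc : (α ^ l) x = (α ^ k) x := Classical.choose_spec h
    have h1 : (α ^ (k - l)) x = x := by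
      have e : k - l = -l + k := by ring
      rw [e, zpow_add, Equiv.Perm.mul_apply, ← hc, ← Equiv.Perm.mul_apply, ← zpow_add,
        neg_add_cancel, zpow_zero, Equiv.Perm.one_apply]
    have e : m - l = (m - k) + (k - l) := by ring
    rw [e, zpow_add, Equiv.Perm.mul_apply, h1]
  have hinv : Function.Involutive f := by
    intro z
    by_cases h : α.SameCycle x z
    · obtain ⟨k, hk⟩ := h
      rw [← hk, key, key]
      congr 1
      ring
    · rw [hf]
      simp only [dif_neg h]
  let ω : Equiv.Perm (Fin n) := Function.Involutive.toPerm f hinv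
  have hωapp : ∀ z, ω z = f z := fun z => rfl
  have hmul : ω * ω = 1 := by
    ext z
    simp only [Equiv.Perm.mul_apply, Equiv.Perm.one_apply, hωapp]
    exact congrArg Fin.val (hinv z)
  refine ⟨ω, hmul, ?_, ?_, ?_⟩
  · have hco : ∀ z, ω (α (ω z)) = α⁻¹ z := by
      intro z
      by_cases h : α.SameCycle x z
      · obtain ⟨k, hk⟩ := h
        have e1 : ω z = (α ^ (m - k)) x := by
          rw [hωapp, ← hk]; exact key k
        have step : ∀ j : ℤ, α ((α ^ j) x) = (α ^ (1 + j)) x := by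
          intro j
          rw [zpow_one_add, Equiv.Perm.mul_apply]
        have e2 : α⁻¹ z = (α ^ (k - 1)) x := by
          rw [← hk]
          have e3 : (α ^ k) x = α ((α ^ (k - 1)) x) := by
            rw [step]; congr 1; ring
          rw [e3, ← Equiv.Perm.mul_apply, inv_mul_cancel, Equiv.Perm.one_apply]
        rw [e1, step, hωapp, key, e2]
        congr 1
        ring
      · have hz : α z = z := by
          by_contra hz
          exact h (hα.sameCycle (Equiv.Perm.mem_support.mp hx) hz)
        have hωz : ω z = z := by
          rw [hωapp, hf]; simp only [dif_neg h]
        have hiz : α⁻¹ z = z := by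
          conv_lhs => rw [← hz]
          exact Equiv.symm_apply_apply α z
        rw [hωz, hz, hωz, hiz]
    have hinv' : ω⁻¹ = ω := inv_eq_of_mul_eq_one_left hmul
    ext z
    simp only [Equiv.Perm.mul_apply]
    rw [hinv']
    exact congrArg Fin.val (hco z)
  · have := key 0
    rw [hωapp]
    simpa [hm] using this
  · intro z hz
    rw [Equiv.Perm.mem_support] at hz ⊢
    by_contra hzfix
    have hz' : α z = z := hzfix
    have h : ¬ α.SameCycle x z := by
      intro hsc
      have := (hsc.mem_support_iff).mp hx
      exact (Equiv.Perm.mem_support.mp this) hzfix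
    apply hz
    rw [hωapp, hf]; simp only [dif_neg h]
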